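/- Let p be a prime, g ≥ 1, and let 1 → Z → E → Σ_g → 1 be a central extension of the orientable surface group Σ_g of genus g by a finite abelian p-group Z (so Z is contained in the centre of E and E/Z ≅ Σ_g). Then E has a normal subgroup V of p-power index containing Z such that the central extension 1 → Z → V → V/Z → 1 splits; that is, V is isomorphic to the direct product Z × (V/Z). -/

import Mathlib

open scoped commutatorElement

/-- The single relator `[a₁,b₁]⋯[a_g,b_g]` of the genus-`g` orientable surface group,
as an element of the free group on generators `(i, true) = aᵢ` and `(i, false) = bᵢ`. -/
def surfaceRelator (g : ℕ) : FreeGroup (Fin g × Bool) :=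
  (List.ofFn fun i : Fin g => ⁅FreeGroup.of (i, true), FreeGroup.of (i, false)⁆).prod

/-- The orientable surface group of genus `g`, presented by generators
`a₁,b₁,…,a_g,b_g` and the single relation `[a₁,b₁]⋯[a_g,b_g] = 1`. -/
def SurfaceGroup (g : ℕ) : Type :=
  PresentedGroup ({surfaceRelator g} : Set (FreeGroup (Fin g × Bool)))

instance (g : ℕ) : Group (SurfaceGroup g) :=
  inferInstanceAs (Group (PresentedGroup _))

namespace Stmt9Aux

variable {E : Type*} [Group E]

/-- Heisenberg-type central extension of `ℤ × ℤ` by `E` along a central element `z`. -/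
@[ext]
structure Hei (z : Subgroup.center E) where
  a : ℤ
  b : ℤ
  e : E

namespace Hei

variable {z : Subgroup.center E}

instance : Mul (Hei z) :=
  ⟨fun x y => ⟨x.a + y.a, x.b + y.b, x.e * y.e * (z : E) ^ (-(x.a * y.b))⟩⟩
instance : One (Hei z) := ⟨⟨0, 0, 1⟩⟩
instance : Inv (Hei z) := ⟨fun x => ⟨-x.a, -x.b, x.e⁻¹ * (z : E) ^ (-(x.a * x.b))⟩⟩

@[simp] lemma mul_a (x y : Hei z) : (x * y).a = x.a + y.a := rfl
@[simp] lemma mul_b (x y : Hei z) : (x * y).b = x.b + y.b := rfl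
@[simp] lemma mul_e (x y : Hei z) :
    (x * y).e = x.e * y.e * (z : E) ^ (-(x.a * y.b)) := rfl
@[simp] lemma one_a : (1 : Hei z).a = 0 := rfl
@[simp] lemma one_b : (1 : Hei z).b = 0 := rfl
@[simp] lemma one_e : (1 : Hei z).e = 1 := rfl
@[simp] lemma inv_a (x : Hei z) : x⁻¹.a = -x.a := rfl
@[simp] lemma inv_b (x : Hei z) : x⁻¹.b = -x.b := rfl
@[simp] lemma inv_e (x : Hei z) : x⁻¹.e = x.e⁻¹ * (z : E) ^ (-(x.a * x.b)) := rfl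

lemma zc (n : ℤ) (v : E) : v * (z : E) ^ n = (z : E) ^ n * v :=
  Subgroup.mem_center_iff.mp (Subgroup.zpow_mem _ z.2 n) v

lemma pushz (m n : ℤ) (u v : E) :
    u * (z : E) ^ m * (v * (z : E) ^ n) = u * v * (z : E) ^ (m + n) := by
  rw [mul_assoc u, ← mul_assoc ((z : E) ^ m), ← zc m v, mul_assoc v, ← zpow_add, ← mul_assoc]

lemma central_pull (v w : E) (n : ℤ) :
    v * (z : E) ^ n * w = v * w * (z : E) ^ n := by
  rw [mul_assoc, ← zc, ← mul_assoc]

instance : Group (Hei z) :=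
  Group.ofLeftAxioms
    (fun x y w => by
      ext
      · simp [add_assoc]
      · simp [add_assoc]
      · simp only [mul_e, mul_a, mul_b]
        rw [mul_assoc (x.e * y.e * (z : E) ^ (-(x.a * y.b))), pushz,
          ← mul_assoc x.e (y.e * w.e), mul_assoc (x.e * (y.e * w.e)), ← zpow_add,
          ← mul_assoc x.e y.e w.e]
        congr 1
        ring_nf)
    (fun x => by
      ext <;> simp)
    (fun x => by
      ext
      · simp
      · simp
      · simp only [mul_e, inv_e, inv_a, inv_b, mul_a, mul_b, one_e]
        rw [central_pull x.e⁻¹ x.e, inv_mul_cancel, one_mul, ← zpow_add]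
        have h : -(x.a * x.b) + -(-x.a * x.b) = 0 := by ring
        rw [h, zpow_zero])

/-- Embedding of `E` in the third coordinate. -/
def jE (z : Subgroup.center E) : E →* Hei z where
  toFun e := ⟨0, 0, e⟩
  map_one' := rfl
  map_mul' x y := by ext <;> simp

/-- First coordinate projection. -/
def pA (z : Subgroup.center E) : Hei z →* Multiplicative ℤ where
  toFun x := Multiplicative.ofAdd x.a
  map_one' := rfl
  map_mul' x y := rfl

/-- Third coordinate, mod a normal subgroup containing `z`. -/
def pQ (z : Subgroup.center E) (Z : Subgroup E) [Z.Normal] (hzZ : (z : E) ∈ Z) :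
    Hei z →* E ⧸ Z where
  toFun x := QuotientGroup.mk x.e
  map_one' := rfl
  map_mul' x y := by
    show ((x.e * y.e * (z : E) ^ (-(x.a * y.b)) : E) : E ⧸ Z)
      = ((x.e : E ⧸ Z) * (y.e : E ⧸ Z))
    rw [QuotientGroup.mk_mul, QuotientGroup.mk_mul,
      (QuotientGroup.eq_one_iff _).mpr (Z.zpow_mem hzZ _), mul_one]

lemma central_pull_inv (v w : E) : v * (z : E)⁻¹ * w = v * w * (z : E)⁻¹ := by
  simpa using central_pull v w (-1)

lemma comm_one (e e' : E) :
    ⁅((⟨1, 0, e⟩ : Hei z)), ((⟨0, 1, e'⟩ : Hei z))⁆ = ⟨0, 0, ⁅e, e'⁆ * (z : E) ^ (-1 : ℤ)⟩ := by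
  show (⟨1, 0, e⟩ : Hei z) * ⟨0, 1, e'⟩ * (⟨1, 0, e⟩ : Hei z)⁻¹ * (⟨0, 1, e'⟩ : Hei z)⁻¹ = _
  ext
  · simp
  · simp
  · simp only [mul_e, inv_e, mul_a, mul_b, inv_a, inv_b]
    norm_num
    rw [central_pull_inv (e * e') e⁻¹, central_pull_inv (e * e' * e⁻¹) e'⁻¹]
    rfl

end Hei
end Stmt9Aux

/-- Let `p` be a prime, `g ≥ 1`, and let `1 → Z → E → Σ_g → 1` be a central
extension of the surface group `Σ_g` by a finite abelian `p`-group `Z` (so `Z` is central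
in `E` and `E/Z ≅ Σ_g`).  Then `E` has a normal subgroup `V` of `p`-power index
containing `Z` for which the central extension `1 → Z → V → V/Z → 1` splits: there is a
subgroup `H ≤ V` with `Z ⊓ H = 1` and `Z ⊔ H = V`, so that `V` is the internal direct
product `Z × H ≅ Z × (V/Z)`. -/
theorem stmt_9 (p : ℕ) (hp : p.Prime) (g : ℕ) (hg : 1 ≤ g) (E : Type*) [Group E]
    (Z : Subgroup E) (hZ : Z ≤ Subgroup.center E) (hZfin : Finite Z)
    (hZp : IsPGroup p Z) (hZnormal : Z.Normal) (eq : (E ⧸ Z) ≃* SurfaceGroup g) :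
    ∃ V : Subgroup E, V.Normal ∧ (∃ n : ℕ, V.index = p ^ n) ∧ Z ≤ V ∧
      ∃ H : Subgroup E, H ≤ V ∧ Z ⊓ H = ⊥ ∧ Z ⊔ H = V ∧
        Nonempty (V ≃* Z × H) := by
  classical
  haveI := hZnormal
  obtain ⟨g', rfl⟩ : ∃ g', g = g' + 1 := ⟨g - 1, by omega⟩
  set rels : Set (FreeGroup (Fin (g' + 1) × Bool)) := {surfaceRelator (g' + 1)} with hrels
  let eqP : (E ⧸ Z) ≃* PresentedGroup rels := eq
  let mkP : FreeGroup (Fin (g' + 1) × Bool) →* PresentedGroup rels :=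
    QuotientGroup.mk' (Subgroup.normalClosure rels)
  let ρ : FreeGroup (Fin (g' + 1) × Bool) →* E ⧸ Z := eqP.symm.toMonoidHom.comp mkP
  choose lift hlift using fun x : Fin (g' + 1) × Bool =>
    QuotientGroup.mk'_surjective Z (ρ (FreeGroup.of x))
  let θ : FreeGroup (Fin (g' + 1) × Bool) →* E := FreeGroup.lift lift
  have hθ : (QuotientGroup.mk' Z).comp θ = ρ := by
    apply FreeGroup.ext_hom
    intro x
    simpa [θ] using hlift x
  have hθw : ∀ w, ((θ w : E) : E ⧸ Z) = ρ w := fun w => DFunLike.congr_fun hθ w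
  have hmkPr : mkP (surfaceRelator (g' + 1)) = 1 := by
    apply (QuotientGroup.eq_one_iff _).mpr
    exact Subgroup.subset_normalClosure rfl
  have hρr : ρ (surfaceRelator (g' + 1)) = 1 := by
    show eqP.symm (mkP (surfaceRelator (g' + 1))) = 1
    rw [hmkPr, map_one]
  have hzZ : θ (surfaceRelator (g' + 1)) ∈ Z :=
    (QuotientGroup.eq_one_iff _).mp ((hθw _).trans hρr)
  set z : Subgroup.center E := ⟨θ (surfaceRelator (g' + 1)), hZ hzZ⟩ with hzdef
  obtain ⟨k, hk⟩ := hZp ⟨θ (surfaceRelator (g' + 1)), hzZ⟩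
  set q : ℕ := p ^ k with hq
  haveI : NeZero q := ⟨pow_ne_zero _ hp.ne_zero⟩
  have hzq : (z : E) ^ q = 1 := by
    have := congrArg Subtype.val hk
    simpa using this
  have hzpow : ∀ n : ℤ, (q : ℤ) ∣ n → (z : E) ^ n = 1 := by
    rintro n ⟨m, rfl⟩
    rw [zpow_mul, zpow_natCast, hzq, one_zpow]
  -- the Heisenberg representation
  let fgen : Fin (g' + 1) × Bool → Stmt9Aux.Hei z := fun x =>
    ⟨if x.1.val = 0 ∧ x.2 = true then 1 else 0,
     if x.1.val = 0 ∧ x.2 = false then 1 else 0, lift x⟩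
  let Ψ : FreeGroup (Fin (g' + 1) × Bool) →* Stmt9Aux.Hei z := FreeGroup.lift fgen
  set D : Fin (g' + 1) → E := fun i => ⁅lift (i, true), lift (i, false)⁆ with hD
  set c : Fin (g' + 1) → E :=
    fun i => D i * (if i.val = 0 then (z : E) ^ (-1 : ℤ) else 1) with hc
  have hθr : (z : E) = (List.ofFn D).prod := by
    show θ (surfaceRelator (g' + 1)) = _
    rw [surfaceRelator, map_list_prod, List.map_ofFn]
    have hcomp : (⇑θ ∘ fun i : Fin (g' + 1) =>
        ⁅FreeGroup.of (i, true), FreeGroup.of (i, false)⁆) = D := by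
      funext i
      show θ ⁅FreeGroup.of (i, true), FreeGroup.of (i, false)⁆ = D i
      rw [map_commutatorElement]
      show ⁅FreeGroup.lift lift (FreeGroup.of (i, true)),
            FreeGroup.lift lift (FreeGroup.of (i, false))⁆ = D i
      rw [FreeGroup.lift_apply_of, FreeGroup.lift_apply_of]
    rw [hcomp]
  have hΨr : Ψ (surfaceRelator (g' + 1)) = 1 := by
    have hd : (Ψ ∘ fun i : Fin (g' + 1) =>
        ⁅FreeGroup.of (i, true), FreeGroup.of (i, false)⁆) = Stmt9Aux.Hei.jE z ∘ c := by
      funext i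
      show Ψ ⁅FreeGroup.of (i, true), FreeGroup.of (i, false)⁆ = Stmt9Aux.Hei.jE z (c i)
      rw [map_commutatorElement]
      show ⁅FreeGroup.lift fgen (FreeGroup.of (i, true)),
            FreeGroup.lift fgen (FreeGroup.of (i, false))⁆ = _
      rw [FreeGroup.lift_apply_of, FreeGroup.lift_apply_of]
      by_cases h : i.val = 0
      · have h1 : fgen (i, true) = ⟨1, 0, lift (i, true)⟩ := by simp [fgen, Fin.val_eq_zero_iff.mp h]
        have h2 : fgen (i, false) = ⟨0, 1, lift (i, false)⟩ := by simp [fgen, Fin.val_eq_zero_iff.mp h]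
        rw [h1, h2, Stmt9Aux.Hei.comm_one]
        rw [hc]
        simp only [h, if_pos]
        rfl
      · have h1 : fgen (i, true) = ⟨0, 0, lift (i, true)⟩ := by simp [fgen, mt Fin.val_eq_zero_iff.mpr h]
        have h2 : fgen (i, false) = ⟨0, 0, lift (i, false)⟩ := by simp [fgen, mt Fin.val_eq_zero_iff.mpr h]
        rw [h1, h2]
        show ⁅Stmt9Aux.Hei.jE z (lift (i, true)), Stmt9Aux.Hei.jE z (lift (i, false))⁆ = _
        rw [← map_commutatorElement]
        rw [hc]
        simp only [h, if_false, mul_one]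
        rfl
    rw [surfaceRelator, map_list_prod, List.map_ofFn, hd, ← List.map_ofFn,
      ← map_list_prod]
    have hprod : (List.ofFn c).prod = 1 := by
      rw [List.ofFn_succ, List.prod_cons]
      have h0 : c 0 = D 0 * (z : E) ^ (-1 : ℤ) := by
        rw [hc]; simp
      have htail : (List.ofFn fun i : Fin g' => c i.succ)
          = List.ofFn fun i : Fin g' => D i.succ := by
        congr 1
        funext i
        rw [hc]
        simp [Fin.val_succ]
      rw [h0, htail, Stmt9Aux.Hei.central_pull]
      have : D 0 * (List.ofFn fun i : Fin g' => D i.succ).prod = (z : E) := by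
        rw [hθr, List.ofFn_succ, List.prod_cons]
      rw [this, zpow_neg_one, mul_inv_cancel]
    rw [hprod, map_one]
  let Ψb : PresentedGroup rels →* Stmt9Aux.Hei z :=
    PresentedGroup.toGroup (f := fgen) (by
      intro r hr
      rw [hrels, Set.mem_singleton_iff] at hr
      subst hr
      exact hΨr)
  have hΨb_of : ∀ x, Ψb (PresentedGroup.of x) = fgen x := fun x => PresentedGroup.toGroup.of _
  have hsec : ∀ u : PresentedGroup rels, Stmt9Aux.Hei.pQ z Z hzZ (Ψb u) = eqP.symm u := by
    have hcomp : (Stmt9Aux.Hei.pQ z Z hzZ).comp Ψb = eqP.symm.toMonoidHom := by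
      apply PresentedGroup.ext
      intro x
      rw [MonoidHom.comp_apply, hΨb_of]
      show (QuotientGroup.mk' Z) (lift x) = eqP.symm (PresentedGroup.of x)
      rw [hlift x]
      rfl
    exact fun u => DFunLike.congr_fun hcomp u
  -- the homomorphism to ZMod q
  let castM : Multiplicative ℤ →* Multiplicative (ZMod q) :=
    AddMonoidHom.toMultiplicative (Int.castAddHom (ZMod q))
  let Λ : E →* Multiplicative (ZMod q) :=
    (castM.comp ((Stmt9Aux.Hei.pA z).comp (Ψb.comp eqP.toMonoidHom))).comp
      (QuotientGroup.mk' Z)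
  let V : Subgroup E := Λ.ker
  have hV_apply : ∀ x : E,
      Λ x = Multiplicative.ofAdd (((Ψb (eqP ((x : E) : E ⧸ Z))).a : ℤ) : ZMod q) :=
    fun x => rfl
  have hVmem : ∀ x : E, x ∈ V ↔ (q : ℤ) ∣ (Ψb (eqP ((x : E) : E ⧸ Z))).a := by
    intro x
    rw [MonoidHom.mem_ker, hV_apply x, ← ZMod.intCast_zmod_eq_zero_iff_dvd]
    exact ⟨fun h => by simpa using congrArg Multiplicative.toAdd h,
      fun h => by rw [h]; rfl⟩
  have hZV : Z ≤ V := by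
    intro x hx
    rw [hVmem]
    have h1 : ((x : E) : E ⧸ Z) = 1 := (QuotientGroup.eq_one_iff _).mpr hx
    rw [h1, map_one, map_one]
    exact dvd_zero _
  let sfun : ↥V → E := fun v => (Ψb (eqP ((v : E) : E ⧸ Z))).e
  have hpi : ∀ v : ↥V, ((sfun v : E) : E ⧸ Z) = ((v : E) : E ⧸ Z) := by
    intro v
    have h := hsec (eqP ((v : E) : E ⧸ Z))
    rw [MulEquiv.symm_apply_apply] at h
    exact h
  let S : ↥V →* E :=
    { toFun := sfun
      map_one' := by
        show (Ψb (eqP (((1 : ↥V) : E) : E ⧸ Z))).e = 1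
        have h1 : (((1 : ↥V) : E) : E ⧸ Z) = 1 := by norm_num
        rw [h1, map_one, map_one]
        rfl
      map_mul' := by
        intro v w
        show (Ψb (eqP (((v * w : ↥V) : E) : E ⧸ Z))).e = sfun v * sfun w
        have h1 : (((v * w : ↥V) : E) : E ⧸ Z) = ((v : E) : E ⧸ Z) * ((w : E) : E ⧸ Z) := by
          norm_num
        rw [h1, map_mul, map_mul, Stmt9Aux.Hei.mul_e,
          hzpow _ (dvd_neg.mpr (Dvd.dvd.mul_right ((hVmem _).mp v.2) _)), mul_one] }
  have hSV : ∀ v : ↥V, S v ∈ V := by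
    intro v
    rw [hVmem]
    rw [show ((S v : E) : E ⧸ Z) = ((v : E) : E ⧸ Z) from hpi v]
    exact (hVmem _).mp v.2
  let H : Subgroup E := S.range
  have hHV : H ≤ V := by
    rintro x ⟨v, rfl⟩
    exact hSV v
  have hSone : ∀ v : ↥V, ((v : E) : E ⧸ Z) = 1 → S v = 1 := by
    intro v hv
    show (Ψb (eqP ((v : E) : E ⧸ Z))).e = 1
    rw [hv, map_one, map_one]
    rfl
  have hZH : Z ⊓ H = ⊥ := by
    rw [eq_bot_iff]
    intro x hx
    obtain ⟨hxZ, hxH⟩ := Subgroup.mem_inf.mp hx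
    obtain ⟨v, rfl⟩ := hxH
    rw [Subgroup.mem_bot]
    apply hSone v
    rw [← hpi v]
    exact (QuotientGroup.eq_one_iff _).mpr hxZ
  have hdec : ∀ v : ↥V, (v : E) * (S v)⁻¹ ∈ Z := by
    intro v
    apply (QuotientGroup.eq_one_iff _).mp
    rw [QuotientGroup.mk_mul, QuotientGroup.mk_inv,
      show ((S v : E) : E ⧸ Z) = ((v : E) : E ⧸ Z) from hpi v]
    simp
  have hsup : Z ⊔ H = V := by
    refine le_antisymm (sup_le hZV hHV) ?_
    intro x hx
    have hxv : x = (x * (S ⟨x, hx⟩)⁻¹) * S ⟨x, hx⟩ := by group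
    rw [hxv]
    exact Subgroup.mul_mem _ ((le_sup_left : Z ≤ Z ⊔ H) (hdec ⟨x, hx⟩))
      ((le_sup_right : H ≤ Z ⊔ H) ⟨⟨x, hx⟩, rfl⟩)
  let φ : (↥Z × ↥H) →* ↥V :=
    { toFun := fun a => ⟨(a.1 : E) * (a.2 : E), V.mul_mem (hZV a.1.2) (hHV a.2.2)⟩
      map_one' := by
        ext
        show ((1 : ↥Z) : E) * ((1 : ↥H) : E) = 1
        simp
      map_mul' := by
        intro a b
        ext
        show ((a.1 : E) * (b.1 : E)) * ((a.2 : E) * (b.2 : E))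
          = ((a.1 : E) * (a.2 : E)) * ((b.1 : E) * (b.2 : E))
        have hcomm : (a.2 : E) * (b.1 : E) = (b.1 : E) * (a.2 : E) :=
          Subgroup.mem_center_iff.mp (hZ b.1.2) (a.2 : E)
        calc (a.1 : E) * (b.1 : E) * ((a.2 : E) * (b.2 : E))
            = (a.1 : E) * ((b.1 : E) * (a.2 : E)) * (b.2 : E) := by group
          _ = (a.1 : E) * ((a.2 : E) * (b.1 : E)) * (b.2 : E) := by rw [hcomm]
          _ = (a.1 : E) * (a.2 : E) * ((b.1 : E) * (b.2 : E)) := by group }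
  have hinj : Function.Injective φ := by
    rw [injective_iff_map_eq_one]
    intro a ha
    have h1 : (a.1 : E) * (a.2 : E) = 1 := congrArg Subtype.val ha
    have h2 : (a.1 : E) = ((a.2 : E))⁻¹ := eq_inv_of_mul_eq_one_left h1
    have hmem : (a.1 : E) ∈ Z ⊓ H :=
      Subgroup.mem_inf.mpr ⟨a.1.2, h2 ▸ H.inv_mem a.2.2⟩
    rw [hZH, Subgroup.mem_bot] at hmem
    have h3 : (a.2 : E) = 1 := by
      have h4 := h1
      rw [hmem, one_mul] at h4
      exact h4
    exact Prod.ext (Subtype.ext hmem) (Subtype.ext h3)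
  have hsurjphi : Function.Surjective φ := by
    intro v
    refine ⟨⟨⟨(v : E) * (S v)⁻¹, hdec v⟩, ⟨S v, ⟨v, rfl⟩⟩⟩, ?_⟩
    ext
    show (v : E) * (S v)⁻¹ * S v = (v : E)
    group
  -- index computation
  have ha1 : Λ (lift (⟨0, Nat.succ_pos g'⟩, true)) = Multiplicative.ofAdd (1 : ZMod q) := by
    have h1 : Λ (lift (⟨0, Nat.succ_pos g'⟩, true))
        = castM (Stmt9Aux.Hei.pA z (Ψb (eqP
            ((QuotientGroup.mk' Z) (lift (⟨0, Nat.succ_pos g'⟩, true)))))) := rfl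
    rw [h1, hlift]
    rw [show eqP (ρ (FreeGroup.of (⟨0, Nat.succ_pos g'⟩, true)))
        = mkP (FreeGroup.of (⟨0, Nat.succ_pos g'⟩, true)) from eqP.apply_symm_apply _]
    rw [show mkP (FreeGroup.of (⟨0, Nat.succ_pos g'⟩, true))
        = PresentedGroup.of (⟨0, Nat.succ_pos g'⟩, true) from rfl]
    rw [hΨb_of]
    show Multiplicative.ofAdd
        (((if ((⟨0, Nat.succ_pos g'⟩ : Fin (g' + 1)).val = 0 ∧ true = true)
          then (1 : ℤ) else 0) : ℤ) : ZMod q) = Multiplicative.ofAdd (1 : ZMod q)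
    norm_num
  have hpow : ∀ n : ℕ, Λ (lift (⟨0, Nat.succ_pos g'⟩, true) ^ n)
      = Multiplicative.ofAdd ((n : ZMod q)) := by
    intro n
    rw [map_pow, ha1, ← ofAdd_nsmul]
    congr 1
    simp [nsmul_eq_mul]
  have hLsurj : Function.Surjective Λ := by
    intro cc
    refine ⟨lift (⟨0, Nat.succ_pos g'⟩, true) ^ (Multiplicative.toAdd cc).val, ?_⟩
    rw [hpow, ZMod.natCast_rightInverse (Multiplicative.toAdd cc)]
    rfl
  have hVindex : V.index = q := by
    show Λ.ker.index = q
    rw [Subgroup.index_ker, MonoidHom.range_eq_top_of_surjective Λ hLsurj,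
      Nat.card_congr Subgroup.topEquiv.toEquiv]
    show Nat.card (ZMod q) = q
    exact Nat.card_zmod q
  refine ⟨V, ?_, ⟨k, hVindex.trans hq⟩, hZV, H, hHV, hZH, hsup,
    ⟨(MulEquiv.ofBijective φ ⟨hinj, hsurjphi⟩).symm⟩⟩
  show Λ.ker.Normal
  infer_instance
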